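/- Let G be a finite abelian group, α an automorphism of G with α² = 1, and S = G \ ω_α(G), where ω_α(G) = {α(g)·g⁻¹ : g ∈ G}. Then S and α satisfy the defining conditions of a generalized Cayley graph, and GC(G, S, α) is isomorphic to the complete multipartite graph with m parts each of size n (that is, K_m[∅_n], the lexicographic product of the complete graph K_m with the empty graph on n vertices), where n = |ω_α(G)| and m = |G|/n. -/

import Mathlib

/-- The generalized Cayley graph `GC(G, S, α)`. -/
def GC {G : Type*} [Group G] (α : G ≃* G) (S : Set G)
    (h1 : ∀ x : G, α (α x) = x)
    (h2 : ∀ x : G, α x⁻¹ * x ∉ S)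
    (h3 : ⇑α '' S⁻¹ = S) : SimpleGraph G where
  Adj x y := α x⁻¹ * y ∈ S
  symm := ⟨by
    intro x y hxy
    have hmem : (α x⁻¹ * y)⁻¹ ∈ S⁻¹ := by simpa [Set.mem_inv] using hxy
    have himg : α ((α x⁻¹ * y)⁻¹) ∈ ⇑α '' S⁻¹ := Set.mem_image_of_mem _ hmem
    rw [h3] at himg
    simpa [mul_inv_rev, map_mul, map_inv, h1] using himg⟩
  loopless := ⟨fun x hx => h2 x hx⟩


/-- For a finite abelian group `G`, an automorphism `α` with `α² = 1` and
`S = G \ ω_α(G)`, the pair `(S, α)` satisfies the defining conditions of a generalized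
Cayley graph, and `GC(G, S, α)` is isomorphic to the complete multipartite graph with
`m = |G|/n` parts each of size `n = |ω_α(G)|`. -/
theorem stmt_19 {G : Type*} [CommGroup G] [Fintype G] (α : G ≃* G)
    (h1 : ∀ x : G, α (α x) = x) :
    ∃ (h2 : ∀ x : G, α x⁻¹ * x ∉ Set.univ \ Set.range (fun g : G => α g * g⁻¹))
      (h3 : ⇑α '' (Set.univ \ Set.range (fun g : G => α g * g⁻¹))⁻¹ =
        Set.univ \ Set.range (fun g : G => α g * g⁻¹)),
      Nonempty
        (GC α (Set.univ \ Set.range (fun g : G => α g * g⁻¹)) h1 h2 h3 ≃g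
          SimpleGraph.completeMultipartiteGraph
            (fun _ : Fin (Nat.card G / Nat.card (Set.range fun g : G => α g * g⁻¹)) =>
              Fin (Nat.card (Set.range fun g : G => α g * g⁻¹)))) := by
  classical
  set f : G → G := fun g => α g * g⁻¹ with hf
  let H : Subgroup G :=
    { carrier := Set.range f
      one_mem' := ⟨1, by simp [hf]⟩
      mul_mem' := by
        rintro a b ⟨g, rfl⟩ ⟨k, rfl⟩
        exact ⟨g * k, by simp [hf, map_mul, mul_inv, mul_comm, mul_assoc, mul_left_comm]⟩
      inv_mem' := by
        rintro a ⟨g, rfl⟩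
        exact ⟨α g, by simp [hf, h1, mul_inv_rev, mul_comm]⟩ }
  have hH : ∀ x : G, x ∈ H ↔ x ∈ Set.range f := fun _ => Iff.rfl
  have hfwd : ∀ x : G, x ∈ H → α x ∈ H := by
    rintro x ⟨g, rfl⟩
    exact ⟨α g, by simp [hf, h1, map_mul]⟩
  have hαH : ∀ x : G, α x ∈ H ↔ x ∈ H := by
    intro x
    refine ⟨fun hx => ?_, hfwd x⟩
    have := hfwd _ hx
    rwa [h1] at this
  -- h2
  have h2 : ∀ x : G, α x⁻¹ * x ∉ Set.univ \ Set.range f := by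
    intro x hx
    exact hx.2 ⟨x⁻¹, by simp [hf]⟩
  -- h3
  have h3 : ⇑α '' (Set.univ \ Set.range f)⁻¹ = Set.univ \ Set.range f := by
    ext b
    simp only [Set.mem_image, Set.mem_inv, Set.mem_diff, Set.mem_univ, true_and]
    constructor
    · rintro ⟨a, ha, rfl⟩
      intro hb
      exact ha ((hH _).mp (H.inv_mem ((hαH a).mp ((hH _).mpr hb))))
    · intro hb
      refine ⟨α b, ?_, h1 b⟩
      intro h
      exact hb ((hH _).mp ((hαH b).mp (by simpa using H.inv_mem ((hH _).mpr h))))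
  refine ⟨h2, h3, ?_⟩
  -- adjacency characterization
  have hadj : ∀ x y : G, (α x⁻¹ * y ∈ Set.univ \ Set.range f) ↔
      (QuotientGroup.mk x : G ⧸ H) ≠ QuotientGroup.mk y := by
    intro x y
    have h0 : α x⁻¹ * x ∈ H := (hH _).mpr ⟨x⁻¹, by simp [hf]⟩
    have key : α x⁻¹ * y ∈ Set.range f ↔ x⁻¹ * y ∈ H := by
      constructor
      · intro h
        have : (α x⁻¹ * x)⁻¹ * (α x⁻¹ * y) ∈ H := H.mul_mem (H.inv_mem h0) ((hH _).mpr h)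
        have heq : (α x⁻¹ * x)⁻¹ * (α x⁻¹ * y) = x⁻¹ * y := by group
        rwa [heq] at this
      · intro h
        have : (α x⁻¹ * x) * (x⁻¹ * y) ∈ H := H.mul_mem h0 h
        have heq : (α x⁻¹ * x) * (x⁻¹ * y) = α x⁻¹ * y := by group
        rwa [heq] at this
    rw [Set.mem_diff]
    simp only [Set.mem_univ, true_and]
    rw [key.not]
    rw [ne_eq, QuotientGroup.eq]
  -- cardinalities
  have hcard : Nat.card ↥(Set.range f) = Nat.card H := rfl
  have hHpos : 0 < Nat.card H := Nat.card_pos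
  have hquot : Nat.card (G ⧸ H) = Nat.card G / Nat.card ↥(Set.range f) := by
    rw [hcard, Subgroup.card_eq_card_quotient_mul_card_subgroup H,
      Nat.mul_div_cancel _ hHpos]
  -- the equivalence
  have eQ : (G ⧸ H) ≃ Fin (Nat.card G / Nat.card ↥(Set.range f)) :=
    Finite.equivFinOfCardEq hquot
  have hfibcard : ∀ q : G ⧸ H,
      Nat.card {x : G // (QuotientGroup.mk x : G ⧸ H) = q} = Nat.card ↥(Set.range f) := by
    intro q
    rw [hcard]
    induction q using QuotientGroup.induction_on with
    | H a =>
      refine Nat.card_congr ⟨fun x => ⟨a⁻¹ * x.1, ?_⟩, fun h => ⟨a * h.1, ?_⟩, ?_, ?_⟩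
      · have := (QuotientGroup.eq (s := H)).mp x.2.symm
        simpa [mul_comm] using this
      · refine ((QuotientGroup.eq (s := H)).mpr ?_).symm
        simp
      · intro x; ext; simp
      · intro x; ext; simp
  have fiberEquiv : ∀ q : G ⧸ H,
      {x : G // (QuotientGroup.mk x : G ⧸ H) = q} ≃ Fin (Nat.card ↥(Set.range f)) :=
    fun q => Finite.equivFinOfCardEq (hfibcard q)
  let e : G ≃ (Σ _ : Fin (Nat.card G / Nat.card ↥(Set.range f)),
      Fin (Nat.card ↥(Set.range f))) :=
    ((Equiv.sigmaFiberEquiv (QuotientGroup.mk : G → G ⧸ H)).symm.trans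
      (Equiv.sigmaCongrRight fiberEquiv)).trans
      ((Equiv.sigmaEquivProd _ _).trans
        ((eQ.prodCongr (Equiv.refl _)).trans (Equiv.sigmaEquivProd _ _).symm))
  have he1 : ∀ x : G, (e x).1 = eQ (QuotientGroup.mk x) := fun x => rfl
  refine ⟨⟨e, ?_⟩⟩
  intro x y
  show (e x).1 ≠ (e y).1 ↔ _
  rw [he1, he1]
  rw [show (GC α (Set.univ \ Set.range f) h1 h2 h3).Adj x y ↔
      α x⁻¹ * y ∈ Set.univ \ Set.range f from Iff.rfl]
  rw [hadj x y]
  exact (Equiv.injective eQ).ne_iff.symm.symm
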